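/- For each standard face, the corresponding commutative square in Δ (with δ_{vᵢ} on top, δᵢ on bottom, and epimorphisms η and its restriction as vertical maps) is simultaneously a pushout and a pullback square in Δ. -/

import Mathlib

open CategoryTheory SimplexCategory

/-- The square of a standard face is both a pushout and a pullback in `Δ`: if
`η : [m+1] ↠ [n+1]` is an epimorphism, `i` is a standard vertex of the codomain (i.e.
its fiber is the singleton `{v}`), and `dEta : [m] → [n]` is the induced map making the
square with top `δ v`, bottom `δ i`, left `dEta` and right `η` commute, then this square is
simultaneously a pushout and a pullback square in `Δ`. -/
theorem simplexCategory_standardFace_isPushout_isPullback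
    (m n : ℕ) (η : SimplexCategory.mk (m + 1) ⟶ SimplexCategory.mk (n + 1))
    (hη : Epi η) (i : Fin (n + 2)) (v : Fin (m + 2))
    (hfiber : ∀ x : Fin (m + 2), η.toOrderHom x = i ↔ x = v)
    (dEta : SimplexCategory.mk m ⟶ SimplexCategory.mk n)
    (hcomm : SimplexCategory.δ v ≫ η = dEta ≫ SimplexCategory.δ i) :
    IsPushout (SimplexCategory.δ v) dEta η (SimplexCategory.δ i) ∧
      IsPullback (SimplexCategory.δ v) dEta η (SimplexCategory.δ i) := by
  classical
  have happ : ∀ {X Y : SimplexCategory} {f g : X ⟶ Y}, f = g →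
      ∀ x, f.toOrderHom x = g.toOrderHom x := by
    rintro _ _ f g rfl x; rfl
  have hδ : ∀ {k : ℕ} (j : Fin (k + 2)) (x : Fin (k + 1)),
      (SimplexCategory.δ j).toOrderHom x = j.succAbove x := fun _ _ => rfl
  -- commutativity pointwise
  have hcomm' : ∀ x : Fin (m + 1),
      η.toOrderHom (v.succAbove x) = i.succAbove (dEta.toOrderHom x) := fun x =>
    happ hcomm x
  -- `η` never maps a point of the image of `δ v`'s complement to `i`:
  have key : ∀ x : Fin (m + 2), x ≠ v → ∃ y : Fin (m + 1),
      v.succAbove y = x := fun x hx => Fin.exists_succAbove_eq hx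
  -- Pullback part
  have hne : ∀ (s : Limits.PullbackCone η (SimplexCategory.δ i)) (x : Fin (s.pt.len + 1)),
      s.fst.toOrderHom x ≠ v := by
    intro s x hx
    have h1 : η.toOrderHom (s.fst.toOrderHom x) = i := (hfiber _).mpr hx
    have h2 : η.toOrderHom (s.fst.toOrderHom x)
        = i.succAbove (s.snd.toOrderHom x) := happ s.condition x
    rw [h1] at h2
    exact Fin.succAbove_ne i _ h2.symm
  have hpull : IsPullback (SimplexCategory.δ v) dEta η (SimplexCategory.δ i) := by
    apply IsPullback.of_isLimit' ⟨hcomm⟩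
    apply Limits.PullbackCone.IsLimit.mk _
      (fun s => (eq_comp_δ_of_not_surjective' s.fst v (hne s)).choose)
      (fun s => (eq_comp_δ_of_not_surjective' s.fst v (hne s)).choose_spec.symm)
      (fun s => ?_) (fun s m' h₁ _ => ?_)
    · -- fac right
      have hfl := (eq_comp_δ_of_not_surjective' s.fst v (hne s)).choose_spec.symm
      rw [← cancel_mono (SimplexCategory.δ i), Category.assoc, ← hcomm,
        ← Category.assoc, hfl, s.condition]
    · -- uniqueness
      rw [← cancel_mono (SimplexCategory.δ v), h₁]
      exact (eq_comp_δ_of_not_surjective' s.fst v (hne s)).choose_spec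
  -- constancy of maps out on fibres of η
  have hconst : ∀ {X : SimplexCategory} (f : SimplexCategory.mk (m + 1) ⟶ X)
      (g : SimplexCategory.mk n ⟶ X),
      SimplexCategory.δ v ≫ f = dEta ≫ g →
      ∀ x : Fin (m + 2), x ≠ v →
        ∃ y : Fin (m + 1), v.succAbove y = x ∧
          f.toOrderHom x = g.toOrderHom (dEta.toOrderHom y) := by
    intro X f g hfg x hx
    obtain ⟨y, hy⟩ := key x hx
    exact ⟨y, hy, by rw [← hy]; exact happ hfg y⟩
  -- Pushout part
  have hpush : IsPushout (SimplexCategory.δ v) dEta η (SimplexCategory.δ i) := by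
    apply IsPushout.of_isColimit' ⟨hcomm⟩
    haveI := isSplitEpi_of_epi η
    set sec := CategoryTheory.section_ η with hsecdef
    have hsec : sec ≫ η = 𝟙 _ := IsSplitEpi.id η
    have hfac1 : ∀ s : Limits.PushoutCocone (SimplexCategory.δ v) dEta,
        η ≫ sec ≫ s.inl = s.inl := by
      intro s
      ext x : 3
      simp only [comp_toOrderHom, OrderHom.comp_coe, Function.comp_apply]
      set x' : Fin (m + 2) := sec.toOrderHom (η.toOrderHom x) with hx'
      have hηx' : η.toOrderHom x' = η.toOrderHom x := happ hsec (η.toOrderHom x)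
      -- show s.inl x' = s.inl x
      by_cases hxi : η.toOrderHom x = i
      · have h1 : x = v := (hfiber x).mp hxi
        have h2 : x' = v := (hfiber x').mp (hηx'.trans hxi)
        rw [h1, h2]
      · have hxv : x ≠ v := fun h => hxi ((hfiber x).mpr h)
        have hx'v : x' ≠ v := fun h => hxi (hηx' ▸ (hfiber x').mpr h)
        obtain ⟨y, hy, hfy⟩ := hconst s.inl s.inr s.condition x hxv
        obtain ⟨y', hy', hfy'⟩ := hconst s.inl s.inr s.condition x' hx'v
        rw [hfy, hfy']
        congr 1
        have e1 : i.succAbove (dEta.toOrderHom y) = η.toOrderHom x := by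
          rw [← hcomm' y, hy]
        have e2 : i.succAbove (dEta.toOrderHom y') = η.toOrderHom x := by
          rw [← hcomm' y', hy', hηx']
        exact Fin.succAbove_right_injective (e2.trans e1.symm)
    apply Limits.PushoutCocone.IsColimit.mk _ (fun s => sec ≫ s.inl)
      (fun s => hfac1 s) (fun s => ?_) (fun s m' h₁ _ => ?_)
    · -- δ i ≫ sec ≫ inl = inr
      ext z : 3
      simp only [comp_toOrderHom, OrderHom.comp_coe, Function.comp_apply]
      set x' : Fin (m + 2) := sec.toOrderHom ((SimplexCategory.δ i).toOrderHom z) with hx'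
      have hηx' : η.toOrderHom x' = i.succAbove z := by
        have := happ hsec ((SimplexCategory.δ i).toOrderHom z)
        rwa [hδ] at this
      have hx'v : x' ≠ v := by
        intro h
        have := (hfiber x').mpr h
        rw [hηx'] at this
        exact Fin.succAbove_ne i z this
      obtain ⟨y, hy, hfy⟩ := hconst s.inl s.inr s.condition x' hx'v
      rw [hfy]
      congr 1
      have e1 : i.succAbove (dEta.toOrderHom y) = i.succAbove z := by
        rw [← hcomm' y, hy, hηx']
      exact Fin.succAbove_right_injective e1
    · -- uniqueness
      have : η ≫ m' = η ≫ sec ≫ s.inl := by rw [h₁, hfac1 s]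
      exact (cancel_epi η).mp this
  exact ⟨hpush, hpull⟩
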